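/- Let s > 1, C_u, C_v > 0, n a positive integer, and suppose |u_i| ≤ C_u/i^s and |v_i| ≤ C_v/i^s for all i > n. Define (uv)_k = (1/2)∑_{i=1}^∞ u_{i+k} v_i + (1/2)∑_{i=1}^∞ u_i v_{i+k} − (1/2)∑_{i=1}^{k-1} u_i v_{k-i}. Then for every k > 2n, |(uv)_k| ≤ D/k^s with D = (1/2)[ ∑_{i=1}^n (C_u |v_i| + C_v |u_i|)(1 + ((2n+1)/(2n+1−i))^s) + C_u C_v (2 + 2^s) n^{1−s}/(s−1) ]. -/

import Mathlib

lemma ptb_two_rpow {x y p : ℝ} (hx : 0 ≤ x) (hy : 0 ≤ y) (hp : 1 ≤ p) :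
    (x + y) ^ p ≤ 2 ^ (p - 1) * (x ^ p + y ^ p) := by
  lift x to NNReal using hx
  lift y to NNReal using hy
  have := NNReal.rpow_add_le_mul_rpow_add_rpow x y hp
  exact_mod_cast this

lemma ptb_bernoulli {s : ℝ} (hs : 1 < s) {x : ℝ} (hx : 0 < x) :
    ((x + 1) ^ s)⁻¹ ≤ (x ^ (1 - s) - (x + 1) ^ (1 - s)) / (s - 1) := by
  have hx1 : (0:ℝ) < x + 1 := by linarith
  have hb : 1 + s * (1 / x) ≤ (1 + 1 / x) ^ s :=
    one_add_mul_self_le_rpow_one_add (le_trans (by norm_num : (-1:ℝ) ≤ 0) (by positivity)) hs.le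
  have h1 : x + s ≤ (x + 1) ^ s * x ^ (1 - s) := by
    have h2 : (1 + 1 / x : ℝ) = (x + 1) / x := by field_simp
    have h3 : ((x + 1) / x) ^ s = (x + 1) ^ s / x ^ s :=
      Real.div_rpow hx1.le hx.le s
    have h4 : x * ((x + 1) ^ s / x ^ s) = (x + 1) ^ s * x ^ (1 - s) := by
      rw [Real.rpow_sub hx, Real.rpow_one]
      ring
    have h5 : x * (1 + s * (1 / x)) ≤ x * ((1 + 1/x) ^ s) :=
      mul_le_mul_of_nonneg_left hb hx.le
    rw [h2, h3] at h5
    rw [← h4]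
    calc x + s = x * (1 + s * (1 / x)) := by field_simp
      _ ≤ _ := h5
  rw [le_div_iff₀ (by linarith : (0:ℝ) < s - 1), ← sub_nonneg]
  have h6 : (x + 1) ^ (1 - s) * (x + 1) ^ s = x + 1 := by
    rw [← Real.rpow_add hx1]; norm_num
  have h7 : (0:ℝ) < (x+1) ^ s := Real.rpow_pos_of_pos hx1 s
  have h8 : ((x+1)^s)⁻¹ * (x+1)^s = 1 := inv_mul_cancel₀ (ne_of_gt h7)
  nlinarith [h1, h6, h8]

lemma ptb_summable {s : ℝ} (hs : 1 < s) (n : ℕ) :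
    Summable (fun i : ℕ => (((i : ℝ) + n + 1) ^ s)⁻¹) := by
  have h := Real.summable_one_div_nat_rpow.2 hs
  have h2 := (summable_nat_add_iff (f := fun i : ℕ => 1 / (i : ℝ) ^ s) (n + 1)).2 h
  refine h2.congr fun i => ?_
  push_cast
  rw [one_div]
  ring_nf

lemma ptb_tail {s : ℝ} (hs : 1 < s) {n : ℕ} (hn : 0 < n) :
    ∑' i : ℕ, (((i : ℝ) + n + 1) ^ s)⁻¹ ≤ (n : ℝ) ^ (1 - s) / (s - 1) := by
  have hn' : (0:ℝ) < n := by exact_mod_cast hn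
  apply Real.tsum_le_of_sum_range_le (fun i => by positivity)
  intro N
  have key : ∀ i : ℕ, (((i : ℝ) + n + 1) ^ s)⁻¹ ≤
      (((i : ℝ) + n) ^ (1 - s) - (((i:ℝ) + 1) + n) ^ (1 - s)) / (s - 1) := by
    intro i
    have := ptb_bernoulli hs (x := (i : ℝ) + n) (by positivity)
    calc (((i : ℝ) + n + 1) ^ s)⁻¹ = ((((i:ℝ) + n) + 1) ^ s)⁻¹ := by ring_nf
      _ ≤ (((i : ℝ) + n) ^ (1 - s) - (((i:ℝ) + n) + 1) ^ (1-s)) / (s - 1) := this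
      _ = (((i : ℝ) + n) ^ (1 - s) - (((i:ℝ) + 1) + n) ^ (1 - s)) / (s - 1) := by ring_nf
  calc ∑ i ∈ Finset.range N, (((i : ℝ) + n + 1) ^ s)⁻¹
      ≤ ∑ i ∈ Finset.range N,
        ((fun j : ℕ => ((j : ℝ) + n) ^ (1 - s)) i - (fun j : ℕ => ((j : ℝ) + n) ^ (1-s)) (i+1)) / (s-1) := by
        apply Finset.sum_le_sum
        intro i _
        simpa [Nat.cast_add, Nat.cast_one] using key i
    _ = (((0:ℝ) + n) ^ (1 - s) - ((N : ℝ) + n) ^ (1 - s)) / (s - 1) := by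
        rw [← Finset.sum_div, Finset.sum_range_sub' (fun j : ℕ => ((j : ℝ) + n) ^ (1 - s))]
        norm_num
    _ ≤ (n : ℝ) ^ (1 - s) / (s - 1) := by
        have h0 : (0:ℝ) ≤ ((N:ℝ)+n)^(1-s) := by positivity
        have hs1 : (0:ℝ) < s - 1 := by linarith
        have h1 : ((0:ℝ)+n) ^ (1-s) - ((N:ℝ)+n)^(1-s) ≤ (n:ℝ)^(1-s) := by
          norm_num
          linarith
        gcongr

lemma ptb_mid {s : ℝ} (hs : 1 < s) {a b K : ℝ} (ha : 0 < a) (hb : 0 < b) (hab : a + b = K) :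
    (a ^ s)⁻¹ * (b ^ s)⁻¹ ≤ 2 ^ (s - 1) / K ^ s * ((a ^ s)⁻¹ + (b ^ s)⁻¹) := by
  have hK : 0 < K := by linarith
  have hKs : (0:ℝ) < K ^ s := Real.rpow_pos_of_pos hK s
  have has : (0:ℝ) < a ^ s := Real.rpow_pos_of_pos ha s
  have hbs : (0:ℝ) < b ^ s := Real.rpow_pos_of_pos hb s
  have h1 : (a⁻¹ + b⁻¹) ^ s ≤ 2 ^ (s - 1) * ((a⁻¹) ^ s + (b⁻¹) ^ s) :=
    ptb_two_rpow (by positivity) (by positivity) hs.le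
  rw [Real.inv_rpow ha.le, Real.inv_rpow hb.le] at h1
  have h2 : a⁻¹ + b⁻¹ = K / (a * b) := by
    rw [← hab]; field_simp; ring
  rw [h2, Real.div_rpow hK.le (by positivity), Real.mul_rpow ha.le hb.le] at h1
  -- h1 : K^s / (a^s * b^s) ≤ 2^(s-1) * ((a^s)⁻¹ + (b^s)⁻¹)
  calc (a ^ s)⁻¹ * (b ^ s)⁻¹ = (K ^ s / (a ^ s * b ^ s)) / K ^ s := by
        field_simp
    _ ≤ (2 ^ (s-1) * ((a ^ s)⁻¹ + (b ^ s)⁻¹)) / K ^ s := by gcongr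
    _ = 2 ^ (s - 1) / K ^ s * ((a ^ s)⁻¹ + (b ^ s)⁻¹) := by ring

lemma ptb_EA {s Cu Cv : ℝ} (hs : 1 < s) (hCu : 0 < Cu) (hCv : 0 < Cv) {n : ℕ} (hn : 0 < n)
    {u v : ℕ → ℝ}
    (hu : ∀ i : ℕ, n < i → |u i| ≤ Cu / (i : ℝ) ^ s)
    (hv : ∀ i : ℕ, n < i → |v i| ≤ Cv / (i : ℝ) ^ s)
    {k : ℕ} (hk : 2 * n < k) :
    |∑' i : ℕ, u (i + 1 + k) * v (i + 1)| ≤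
      (Cu * ∑ j ∈ Finset.Icc 1 n, |v j| + Cu * Cv * ((n : ℝ) ^ (1 - s) / (s - 1))) / (k : ℝ) ^ s := by
  have hk0 : 0 < k := by omega
  have hkR : (0:ℝ) < (k:ℝ) := by exact_mod_cast hk0
  have hks : (0:ℝ) < (k:ℝ) ^ s := Real.rpow_pos_of_pos hkR s
  -- uniform bound on u at shifted indices
  have hA : ∀ i : ℕ, |u (i + 1 + k)| ≤ Cu / (k:ℝ) ^ s := by
    intro i
    refine (hu _ (by omega)).trans ?_
    gcongr
    · omega
  -- summability of the absolute series
  have hSA : Summable (fun i : ℕ => |u (i + 1 + k) * v (i + 1)|) := by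
    rw [← summable_nat_add_iff n]
    refine Summable.of_nonneg_of_le (fun i => abs_nonneg _) (fun i => ?_)
      ((ptb_summable hs n).mul_left (Cu * Cv / (k:ℝ)^s))
    rw [abs_mul]
    have h1 := hA (i + n)
    have h2 := hv (i + n + 1) (by omega)
    have h3 : (0:ℝ) < ((i + n + 1 : ℕ) : ℝ) ^ s := by
      apply Real.rpow_pos_of_pos; positivity
    calc |u (i + n + 1 + k)| * |v (i + n + 1)|
        ≤ (Cu / (k:ℝ)^s) * (Cv / ((i + n + 1 : ℕ) : ℝ) ^ s) := by
          apply mul_le_mul h1 h2 (abs_nonneg _) (by positivity)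
      _ = (Cu * Cv / (k:ℝ)^s) * (((i : ℝ) + n + 1) ^ s)⁻¹ := by
          push_cast
          field_simp
  have habs : |∑' i : ℕ, u (i + 1 + k) * v (i + 1)| ≤ ∑' i : ℕ, |u (i + 1 + k) * v (i + 1)| := by
    have := norm_tsum_le_tsum_norm (f := fun i : ℕ => u (i + 1 + k) * v (i + 1))
      (by simpa only [Real.norm_eq_abs] using hSA)
    simpa only [Real.norm_eq_abs] using this
  refine habs.trans ?_
  rw [← hSA.sum_add_tsum_nat_add n]
  have head : ∑ i ∈ Finset.range n, |u (i + 1 + k) * v (i + 1)| ≤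
      (Cu / (k:ℝ)^s) * ∑ j ∈ Finset.Icc 1 n, |v j| := by
    have hre : ∑ j ∈ Finset.Icc 1 n, |v j| = ∑ i ∈ Finset.range n, |v (1 + i)| := by
      rw [← Finset.Ico_add_one_right_eq_Icc, Finset.sum_Ico_eq_sum_range]
      norm_num
    rw [hre, Finset.mul_sum]
    apply Finset.sum_le_sum
    intro i _
    rw [abs_mul, add_comm 1 i]
    exact mul_le_mul_of_nonneg_right (by simpa [add_comm i 1] using hA i) (abs_nonneg _)
  have tail : ∑' i : ℕ, |u (i + n + 1 + k) * v (i + n + 1)| ≤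
      (Cu * Cv / (k:ℝ)^s) * ((n : ℝ) ^ (1 - s) / (s - 1)) := by
    have hsum2 : Summable (fun i : ℕ => |u (i + n + 1 + k) * v (i + n + 1)|) :=
      (summable_nat_add_iff (f := fun i : ℕ => |u (i + 1 + k) * v (i + 1)|) n).2 hSA
    have step1 : ∑' i : ℕ, |u (i + n + 1 + k) * v (i + n + 1)| ≤
        ∑' i : ℕ, (Cu * Cv / (k:ℝ)^s) * (((i : ℝ) + n + 1) ^ s)⁻¹ := by
      apply Summable.tsum_le_tsum ?_ hsum2 ((ptb_summable hs n).mul_left _)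
      intro i
      rw [abs_mul]
      have h1 := hA (i + n)
      have h2 := hv (i + n + 1) (by omega)
      have h3 : (0:ℝ) < ((i + n + 1 : ℕ) : ℝ) ^ s := by
        apply Real.rpow_pos_of_pos; positivity
      calc |u (i + n + 1 + k)| * |v (i + n + 1)|
          ≤ (Cu / (k:ℝ)^s) * (Cv / ((i + n + 1 : ℕ) : ℝ) ^ s) := by
            apply mul_le_mul h1 h2 (abs_nonneg _) (by positivity)
        _ = (Cu * Cv / (k:ℝ)^s) * (((i : ℝ) + n + 1) ^ s)⁻¹ := by
            push_cast
            field_simp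
    refine step1.trans ?_
    rw [tsum_mul_left]
    exact mul_le_mul_of_nonneg_left (ptb_tail hs hn) (by positivity)
  have hcomb : ∑ i ∈ Finset.range n, |u (i + 1 + k) * v (i + 1)| +
      ∑' i : ℕ, |u (i + n + 1 + k) * v (i + n + 1)| ≤
      (Cu * ∑ j ∈ Finset.Icc 1 n, |v j| + Cu * Cv * ((n : ℝ) ^ (1 - s) / (s - 1))) / (k : ℝ) ^ s := by
    have := add_le_add head tail
    refine this.trans (le_of_eq ?_)
    ring
  exact hcomb

lemma ptb_EC {s Cu Cv : ℝ} (hs : 1 < s) (hCu : 0 < Cu) (hCv : 0 < Cv) {n : ℕ} (hn : 0 < n)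
    {u v : ℕ → ℝ}
    (hu : ∀ i : ℕ, n < i → |u i| ≤ Cu / (i : ℝ) ^ s)
    (hv : ∀ i : ℕ, n < i → |v i| ≤ Cv / (i : ℝ) ^ s)
    {k : ℕ} (hk : 2 * n < k) :
    |∑ i ∈ Finset.Ico 1 k, u i * v (k - i)| ≤
      (∑ j ∈ Finset.Icc 1 n, (Cu * |v j| + Cv * |u j|) *
          ((2 * (n : ℝ) + 1) / (2 * (n : ℝ) + 1 - (j : ℝ))) ^ s
        + Cu * Cv * 2 ^ s * ((n : ℝ) ^ (1 - s) / (s - 1))) / (k : ℝ) ^ s := by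
  have hk0 : 0 < k := by omega
  have hkR : (0:ℝ) < (k:ℝ) := by exact_mod_cast hk0
  have hks : (0:ℝ) < (k:ℝ) ^ s := Real.rpow_pos_of_pos hkR s
  set R : ℕ → ℝ := fun j => ((2 * (n : ℝ) + 1) / (2 * (n : ℝ) + 1 - (j : ℝ))) ^ s with hRdef
  -- key edge estimate
  have hkey : ∀ j : ℕ, 1 ≤ j → j ≤ n → (((k - j : ℕ) : ℝ) ^ s)⁻¹ ≤ R j / (k : ℝ) ^ s := by
    intro j hj1 hjn
    have hjk : j ≤ k := by omega
    have hjn' : (j : ℝ) ≤ (n : ℝ) := by exact_mod_cast hjn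
    have hm : (0:ℝ) < 2 * (n:ℝ) + 1 := by positivity
    have hcj : (0:ℝ) < 2 * (n:ℝ) + 1 - (j:ℝ) := by linarith
    have hkm : 2 * (n:ℝ) + 1 ≤ (k:ℝ) := by exact_mod_cast (by omega : 2 * n + 1 ≤ k)
    have ha : (0:ℝ) < (k:ℝ) - (j:ℝ) := by linarith
    have hineq : (k:ℝ) * (2 * (n:ℝ) + 1 - (j:ℝ)) / (2 * (n:ℝ) + 1) ≤ (k:ℝ) - (j:ℝ) := by
      rw [div_le_iff₀ hm]
      have hj0 : (0:ℝ) ≤ (j:ℝ) := by positivity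
      nlinarith
    have hr : ((k:ℝ) * (2 * (n:ℝ) + 1 - (j:ℝ)) / (2 * (n:ℝ) + 1)) ^ s ≤ ((k:ℝ) - (j:ℝ)) ^ s :=
      Real.rpow_le_rpow (by positivity) hineq (by linarith)
    rw [Real.div_rpow (by positivity) hm.le, Real.mul_rpow hkR.le hcj.le] at hr
    have hc : ((k - j : ℕ) : ℝ) = (k:ℝ) - (j:ℝ) := by
      push_cast [Nat.cast_sub hjk]; ring
    rw [hc]
    have hB : (0:ℝ) < (k:ℝ) ^ s * (2 * (n:ℝ) + 1 - (j:ℝ)) ^ s / (2 * (n:ℝ) + 1) ^ s := by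
      have := Real.rpow_pos_of_pos hcj s
      have := Real.rpow_pos_of_pos hm s
      positivity
    calc (((k:ℝ) - (j:ℝ)) ^ s)⁻¹
        ≤ ((k:ℝ) ^ s * (2 * (n:ℝ) + 1 - (j:ℝ)) ^ s / (2 * (n:ℝ) + 1) ^ s)⁻¹ :=
          inv_anti₀ hB hr
      _ = R j / (k:ℝ) ^ s := by
          simp only [hRdef]
          have h1 : (0:ℝ) < (2 * (n:ℝ) + 1 - (j:ℝ)) ^ s := Real.rpow_pos_of_pos hcj s
          have h2 : (0:ℝ) < (2 * (n:ℝ) + 1) ^ s := Real.rpow_pos_of_pos hm s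
          rw [Real.div_rpow hm.le hcj.le]
          field_simp
  have hRpos : ∀ j : ℕ, j ≤ n → 0 < R j := by
    intro j hjn
    have hjn' : (j : ℝ) ≤ (n : ℝ) := by exact_mod_cast hjn
    have hcj : (0:ℝ) < 2 * (n:ℝ) + 1 - (j:ℝ) := by linarith
    exact Real.rpow_pos_of_pos (by positivity) s
  -- abs into the sum
  refine (Finset.abs_sum_le_sum_abs _ _).trans ?_
  -- split the range
  rw [← Finset.sum_Ico_consecutive (fun i => |u i * v (k - i)|)
        (by omega : 1 ≤ n + 1) (by omega : n + 1 ≤ k),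
      ← Finset.sum_Ico_consecutive (fun i => |u i * v (k - i)|)
        (by omega : n + 1 ≤ k - n) (by omega : k - n ≤ k)]
  -- edge 1
  have hS1 : ∑ i ∈ Finset.Ico 1 (n + 1), |u i * v (k - i)| ≤
      ∑ j ∈ Finset.Icc 1 n, Cv * |u j| * R j / (k : ℝ) ^ s := by
    rw [Finset.Ico_add_one_right_eq_Icc]
    apply Finset.sum_le_sum
    intro i hi
    obtain ⟨hi1, hi2⟩ := Finset.mem_Icc.1 hi
    have hvk := hv (k - i) (by omega)
    have hkeyi := hkey i hi1 hi2
    rw [abs_mul]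
    calc |u i| * |v (k - i)| ≤ |u i| * (Cv / ((k - i : ℕ) : ℝ) ^ s) :=
          mul_le_mul_of_nonneg_left hvk (abs_nonneg _)
      _ = Cv * |u i| * (((k - i : ℕ) : ℝ) ^ s)⁻¹ := by ring
      _ ≤ Cv * |u i| * (R i / (k : ℝ) ^ s) :=
          mul_le_mul_of_nonneg_left hkeyi (by positivity)
      _ = Cv * |u i| * R i / (k : ℝ) ^ s := by ring
  -- edge 2 (reindexed)
  have hS3 : ∑ i ∈ Finset.Ico (k - n) k, |u i * v (k - i)| ≤
      ∑ j ∈ Finset.Icc 1 n, Cu * |v j| * R j / (k : ℝ) ^ s := by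
    have hre : ∑ i ∈ Finset.Ico (k - n) k, |u i * v (k - i)| =
        ∑ j ∈ Finset.Icc 1 n, |u (k - j) * v j| := by
      apply Finset.sum_nbij' (fun i => k - i) (fun j => k - j)
      · intro a ha
        simp only [Finset.mem_Ico] at ha
        simp only [Finset.mem_Icc]
        omega
      · intro a ha
        simp only [Finset.mem_Icc] at ha
        simp only [Finset.mem_Ico]
        omega
      · intro a ha
        simp only [Finset.mem_Ico] at ha
        omega
      · intro a ha
        simp only [Finset.mem_Icc] at ha
        omega
      · intro a ha
        simp only [Finset.mem_Ico] at ha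
        have : k - (k - a) = a := by omega
        rw [this]
    rw [hre]
    apply Finset.sum_le_sum
    intro j hj
    obtain ⟨hj1, hj2⟩ := Finset.mem_Icc.1 hj
    have huk := hu (k - j) (by omega)
    have hkeyj := hkey j hj1 hj2
    rw [abs_mul]
    calc |u (k - j)| * |v j| ≤ (Cu / ((k - j : ℕ) : ℝ) ^ s) * |v j| :=
          mul_le_mul_of_nonneg_right huk (abs_nonneg _)
      _ = Cu * |v j| * (((k - j : ℕ) : ℝ) ^ s)⁻¹ := by ring
      _ ≤ Cu * |v j| * (R j / (k : ℝ) ^ s) :=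
          mul_le_mul_of_nonneg_left hkeyj (by positivity)
      _ = Cu * |v j| * R j / (k : ℝ) ^ s := by ring
  -- middle
  have hT : ∑ i ∈ Finset.Ico (n + 1) (k - n), (((i : ℕ) : ℝ) ^ s)⁻¹ ≤
      (n : ℝ) ^ (1 - s) / (s - 1) := by
    rw [Finset.sum_Ico_eq_sum_range]
    have hcong : ∀ i ∈ Finset.range (k - n - (n + 1)), (((n + 1 + i : ℕ) : ℝ) ^ s)⁻¹ =
        (((i : ℝ) + n + 1) ^ s)⁻¹ := by
      intro i _
      congr 2
      push_cast
      ring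
    rw [Finset.sum_congr rfl hcong]
    exact (Summable.sum_le_tsum _ (fun i _ => by positivity) (ptb_summable hs n)).trans (ptb_tail hs hn)
  have hS2 : ∑ i ∈ Finset.Ico (n + 1) (k - n), |u i * v (k - i)| ≤
      Cu * Cv * 2 ^ s * ((n : ℝ) ^ (1 - s) / (s - 1)) / (k : ℝ) ^ s := by
    have hterm : ∀ i ∈ Finset.Ico (n + 1) (k - n), |u i * v (k - i)| ≤
        Cu * Cv * (2 ^ (s - 1) / (k:ℝ) ^ s) *
          ((((i : ℕ) : ℝ) ^ s)⁻¹ + (((k - i : ℕ) : ℝ) ^ s)⁻¹) := by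
      intro i hi
      obtain ⟨hi1, hi2⟩ := Finset.mem_Ico.1 hi
      have hiu := hu i (by omega)
      have hiv := hv (k - i) (by omega)
      have hipos : (0:ℝ) < (i : ℝ) := by exact_mod_cast (by omega : 0 < i)
      have hkipos : (0:ℝ) < ((k - i : ℕ) : ℝ) := by exact_mod_cast (by omega : 0 < k - i)
      have hab : ((i : ℕ) : ℝ) + ((k - i : ℕ) : ℝ) = (k : ℝ) := by
        push_cast [Nat.cast_sub (by omega : i ≤ k)]
        ring
      have hmid := ptb_mid hs hipos hkipos hab
      have his : (0:ℝ) < ((i:ℕ):ℝ) ^ s := Real.rpow_pos_of_pos hipos s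
      have hkis : (0:ℝ) < ((k - i : ℕ):ℝ) ^ s := Real.rpow_pos_of_pos hkipos s
      rw [abs_mul]
      calc |u i| * |v (k - i)|
          ≤ (Cu / ((i:ℕ):ℝ) ^ s) * (Cv / ((k - i:ℕ):ℝ) ^ s) :=
            mul_le_mul hiu hiv (abs_nonneg _) (by positivity)
        _ = Cu * Cv * ((((i:ℕ):ℝ) ^ s)⁻¹ * ((((k - i:ℕ):ℝ)) ^ s)⁻¹) := by
            field_simp
        _ ≤ Cu * Cv * (2 ^ (s-1) / (k:ℝ) ^ s * ((((i:ℕ):ℝ) ^ s)⁻¹ + ((((k - i:ℕ):ℝ)) ^ s)⁻¹)) := by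
            apply mul_le_mul_of_nonneg_left hmid (by positivity)
        _ = Cu * Cv * (2 ^ (s - 1) / (k:ℝ) ^ s) *
              ((((i:ℕ):ℝ) ^ s)⁻¹ + (((k - i:ℕ):ℝ) ^ s)⁻¹) := by ring
    have hflip : ∑ i ∈ Finset.Ico (n + 1) (k - n), (((k - i : ℕ) : ℝ) ^ s)⁻¹ =
        ∑ i ∈ Finset.Ico (n + 1) (k - n), (((i : ℕ) : ℝ) ^ s)⁻¹ := by
      apply Finset.sum_nbij' (fun i => k - i) (fun j => k - j)
      · intro a ha
        simp only [Finset.mem_Ico] at ha ⊢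
        omega
      · intro a ha
        simp only [Finset.mem_Ico] at ha ⊢
        omega
      · intro a ha
        simp only [Finset.mem_Ico] at ha
        omega
      · intro a ha
        simp only [Finset.mem_Ico] at ha
        omega
      · intro a ha
        rfl
    calc ∑ i ∈ Finset.Ico (n + 1) (k - n), |u i * v (k - i)|
        ≤ ∑ i ∈ Finset.Ico (n + 1) (k - n), Cu * Cv * (2 ^ (s - 1) / (k:ℝ) ^ s) *
            ((((i : ℕ) : ℝ) ^ s)⁻¹ + (((k - i : ℕ) : ℝ) ^ s)⁻¹) :=
          Finset.sum_le_sum hterm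
      _ = Cu * Cv * (2 ^ (s - 1) / (k:ℝ) ^ s) *
            (∑ i ∈ Finset.Ico (n + 1) (k - n), (((i : ℕ) : ℝ) ^ s)⁻¹ +
             ∑ i ∈ Finset.Ico (n + 1) (k - n), (((k - i : ℕ) : ℝ) ^ s)⁻¹) := by
          rw [← Finset.mul_sum, Finset.sum_add_distrib]
      _ = Cu * Cv * (2 ^ (s - 1) / (k:ℝ) ^ s) *
            (2 * ∑ i ∈ Finset.Ico (n + 1) (k - n), (((i : ℕ) : ℝ) ^ s)⁻¹) := by
          rw [hflip]; ring
      _ ≤ Cu * Cv * (2 ^ (s - 1) / (k:ℝ) ^ s) * (2 * ((n : ℝ) ^ (1 - s) / (s - 1))) := by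
          apply mul_le_mul_of_nonneg_left ?_ (by positivity)
          apply mul_le_mul_of_nonneg_left hT (by norm_num)
      _ = Cu * Cv * 2 ^ s * ((n : ℝ) ^ (1 - s) / (s - 1)) / (k : ℝ) ^ s := by
          have h2 : (2:ℝ) ^ (s - 1) = 2 ^ s / 2 := by
            rw [Real.rpow_sub (by norm_num), Real.rpow_one]
          rw [h2]; ring
  -- combine
  have hcomb := add_le_add hS1 (add_le_add hS2 hS3)
  refine hcomb.trans (le_of_eq ?_)
  rw [← Finset.sum_div, ← Finset.sum_div]
  have hnum : ∑ j ∈ Finset.Icc 1 n, (Cu * |v j| + Cv * |u j|) *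
      ((2 * (n : ℝ) + 1) / (2 * (n : ℝ) + 1 - (j : ℝ))) ^ s
      = ∑ i ∈ Finset.Icc 1 n, Cv * |u i| * R i + ∑ i ∈ Finset.Icc 1 n, Cu * |v i| * R i := by
    rw [← Finset.sum_add_distrib]
    apply Finset.sum_congr rfl
    intro j _
    simp only [hRdef]
    ring
  rw [hnum]
  ring

/-- Tail estimate for the cosine Fourier coefficients of the product of two sine
series with polynomial decay of rate `s`. -/
theorem product_coefficient_tail_bound (s Cu Cv : ℝ) (hs : 1 < s)
    (hCu : 0 < Cu) (hCv : 0 < Cv) (n : ℕ) (hn : 0 < n) (u v : ℕ → ℝ)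
    (hu : ∀ i : ℕ, n < i → |u i| ≤ Cu / (i : ℝ) ^ s)
    (hv : ∀ i : ℕ, n < i → |v i| ≤ Cv / (i : ℝ) ^ s)
    (k : ℕ) (hk : 2 * n < k) :
    |(1 / 2) * (∑' i : ℕ, u (i + 1 + k) * v (i + 1)) +
     (1 / 2) * (∑' i : ℕ, u (i + 1) * v (i + 1 + k)) -
     (1 / 2) * ∑ i ∈ Finset.Ico 1 k, u i * v (k - i)| ≤
    ((1 / 2) * (∑ i ∈ Finset.Icc 1 n,
        (Cu * |v i| + Cv * |u i|) *
          (1 + ((2 * (n : ℝ) + 1) / (2 * (n : ℝ) + 1 - (i : ℝ))) ^ s) +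
      Cu * Cv * (2 + 2 ^ s) * (n : ℝ) ^ (1 - s) / (s - 1))) / (k : ℝ) ^ s := by
  have EA := ptb_EA hs hCu hCv hn hu hv hk
  have EB' := ptb_EA hs hCv hCu hn hv hu hk
  have EB : |∑' i : ℕ, u (i + 1) * v (i + 1 + k)| ≤
      (Cv * ∑ j ∈ Finset.Icc 1 n, |u j| + Cv * Cu * ((n : ℝ) ^ (1 - s) / (s - 1))) / (k : ℝ) ^ s := by
    have hcg : (fun i : ℕ => u (i + 1) * v (i + 1 + k)) = fun i : ℕ => v (i + 1 + k) * u (i + 1) := by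
      funext i; ring
    rw [hcg]
    exact EB'
  have EC := ptb_EC hs hCu hCv hn hu hv hk
  set SA := ∑' i : ℕ, u (i + 1 + k) * v (i + 1) with hSA
  set SB := ∑' i : ℕ, u (i + 1) * v (i + 1 + k) with hSB
  set SC := ∑ i ∈ Finset.Ico 1 k, u i * v (k - i) with hSC
  have e1 : |(1 / 2 : ℝ) * SA + (1 / 2) * SB - (1 / 2) * SC| ≤
      (1 / 2) * |SA| + (1 / 2) * |SB| + (1 / 2) * |SC| := by
    have habs : |(1:ℝ)/2| = 1/2 := abs_of_pos (by norm_num)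
    calc |(1 / 2 : ℝ) * SA + (1 / 2) * SB - (1 / 2) * SC|
        ≤ |(1 / 2 : ℝ) * SA + (1 / 2) * SB| + |(1 / 2 : ℝ) * SC| := by
          rw [sub_eq_add_neg]
          refine (abs_add_le _ _).trans ?_
          rw [abs_neg]
      _ ≤ |(1 / 2 : ℝ) * SA| + |(1 / 2 : ℝ) * SB| + |(1 / 2 : ℝ) * SC| :=
          add_le_add_left (abs_add_le _ _) _
      _ = (1 / 2) * |SA| + (1 / 2) * |SB| + (1 / 2) * |SC| := by
          rw [abs_mul, abs_mul, abs_mul, habs]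
  refine e1.trans ?_
  have h2 : (0:ℝ) ≤ 1 / 2 := by norm_num
  have hstep := add_le_add (add_le_add (mul_le_mul_of_nonneg_left EA h2)
    (mul_le_mul_of_nonneg_left EB h2)) (mul_le_mul_of_nonneg_left EC h2)
  refine hstep.trans (le_of_eq ?_)
  have hsplit : ∑ i ∈ Finset.Icc 1 n, (Cu * |v i| + Cv * |u i|) *
        (1 + ((2 * (n : ℝ) + 1) / (2 * (n : ℝ) + 1 - (i : ℝ))) ^ s)
      = Cu * ∑ j ∈ Finset.Icc 1 n, |v j| + Cv * ∑ j ∈ Finset.Icc 1 n, |u j|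
        + ∑ j ∈ Finset.Icc 1 n, (Cu * |v j| + Cv * |u j|) *
            ((2 * (n : ℝ) + 1) / (2 * (n : ℝ) + 1 - (j : ℝ))) ^ s := by
    rw [Finset.mul_sum, Finset.mul_sum, ← Finset.sum_add_distrib, ← Finset.sum_add_distrib]
    apply Finset.sum_congr rfl
    intro j _
    ring
  rw [hsplit]
  ring
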